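/- Let Ω ⊂ ℝ² be bounded open, w ∈ C¹ with ‖∇w‖_∞ ≤ ε, and let v, w satisfy (weakly, with zero Dirichlet boundary values) ∇·(∇w/√(1+|∇w|²)) = p and Δv = p. Then ∫_Ω |∇(w − v)|² dx = ∫_Ω (1 − 1/√(1+|∇w|²)) ∇w · ∇(w − v) dx, and consequently ‖∇(w − v)‖_{L²(Ω)} ≤ (ε²/2) · ε · |Ω|^{1/2} = (ε³/2)|Ω|^{1/2}. -/

import Mathlib

open Matrix MeasureTheory

private lemma meas_dot {f g : (Fin 2 → ℝ) → Fin 2 → ℝ}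
    (hf : Measurable f) (hg : Measurable g) : Measurable fun x => f x ⬝ᵥ g x := by
  simp only [dotProduct]
  exact Finset.measurable_sum _ fun i _ =>
    ((measurable_pi_apply i).comp hf).mul ((measurable_pi_apply i).comp hg)

private lemma dot_self_nonneg' (u : Fin 2 → ℝ) : 0 ≤ u ⬝ᵥ u := by
  simp only [dotProduct, Fin.sum_univ_two]
  nlinarith [sq_nonneg (u 0), sq_nonneg (u 1)]

private lemma dot_cs (u v : Fin 2 → ℝ) : |u ⬝ᵥ v| ≤ Real.sqrt (u ⬝ᵥ u) * Real.sqrt (v ⬝ᵥ v) := by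
  have h : (u ⬝ᵥ v) ^ 2 ≤ (u ⬝ᵥ u) * (v ⬝ᵥ v) := by
    simp only [dotProduct, Fin.sum_univ_two]
    nlinarith [sq_nonneg (u 0 * v 1 - u 1 * v 0)]
  calc |u ⬝ᵥ v| = Real.sqrt ((u ⬝ᵥ v) ^ 2) := (Real.sqrt_sq_eq_abs _).symm
    _ ≤ Real.sqrt ((u ⬝ᵥ u) * (v ⬝ᵥ v)) := Real.sqrt_le_sqrt h
    _ = _ := Real.sqrt_mul (dot_self_nonneg' u) _

private lemma s_pos {t : ℝ} (ht : 0 ≤ t) : 0 < 1 / Real.sqrt (1 + t) := by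
  have : 0 < Real.sqrt (1 + t) := Real.sqrt_pos.mpr (by linarith)
  positivity

private lemma s_le_one {t : ℝ} (ht : 0 ≤ t) : 1 / Real.sqrt (1 + t) ≤ 1 := by
  have h1 : (1:ℝ) ≤ Real.sqrt (1 + t) := by
    nlinarith [Real.sq_sqrt (show (0:ℝ) ≤ 1 + t by linarith), Real.sqrt_nonneg (1 + t)]
  rw [div_le_one (by linarith)]
  linarith

private lemma one_sub_s_le {t : ℝ} (ht : 0 ≤ t) : 1 - 1 / Real.sqrt (1 + t) ≤ t / 2 := by
  set h := Real.sqrt (1 + t) with hh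
  have h1 : (1:ℝ) ≤ h := by
    nlinarith [Real.sq_sqrt (show (0:ℝ) ≤ 1 + t by linarith), Real.sqrt_nonneg (1 + t)]
  have h2 : h ^ 2 = 1 + t := Real.sq_sqrt (by linarith)
  have h3 : (0:ℝ) < h := by linarith
  have key : h - 1 ≤ t / 2 * h := by nlinarith [sq_nonneg (h - 1)]
  have : 1 - 1 / h = (h - 1) / h := by field_simp
  rw [this, div_le_iff₀ h3]
  linarith

private lemma final_ineq {I M J e : ℝ} (hI : 0 ≤ I) (hM : 0 ≤ M) (he : 0 ≤ e)
    (h1 : I ≤ e * J) (h2 : 2 * (Real.sqrt I * Real.sqrt M) * J ≤ M * I + M * I)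
    (hIM : I ≠ 0 → 0 < M) : Real.sqrt I ≤ e * Real.sqrt M := by
  rcases eq_or_lt_of_le hI with h0 | hIpos
  · rw [← h0, Real.sqrt_zero]; positivity
  · have hMpos : 0 < M := hIM hIpos.ne'
    have hsI : 0 < Real.sqrt I := Real.sqrt_pos.mpr hIpos
    have hsM : 0 < Real.sqrt M := Real.sqrt_pos.mpr hMpos
    have hJ : J ≤ Real.sqrt M * Real.sqrt I := by
      have hpos : 0 < 2 * (Real.sqrt I * Real.sqrt M) := by positivity
      refine le_of_mul_le_mul_left ?_ hpos
      calc 2 * (Real.sqrt I * Real.sqrt M) * J ≤ M * I + M * I := h2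
        _ = 2 * (Real.sqrt I * Real.sqrt M) * (Real.sqrt M * Real.sqrt I) := by
            nlinarith [Real.sq_sqrt hM, Real.sq_sqrt hI]
    have hfin : I ≤ e * (Real.sqrt M * Real.sqrt I) :=
      h1.trans (mul_le_mul_of_nonneg_left hJ he)
    refine le_of_mul_le_mul_right ?_ hsI
    calc Real.sqrt I * Real.sqrt I = I := Real.mul_self_sqrt hI
      _ ≤ e * (Real.sqrt M * Real.sqrt I) := hfin
      _ = e * Real.sqrt M * Real.sqrt I := by ring

private lemma main_aux (μ : Measure (Fin 2 → ℝ)) [IsFiniteMeasure μ]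
    (ε : ℝ) (hε : 0 ≤ ε)
    (a b : (Fin 2 → ℝ) → Fin 2 → ℝ)
    (ham : Measurable a) (hbm : Measurable b)
    (hbound : ∀ᵐ x ∂μ, Real.sqrt (a x ⬝ᵥ a x) ≤ ε)
    (Pw Pm Pp : ℝ)
    (E1 : ∫ x, (1 / Real.sqrt (1 + a x ⬝ᵥ a x)) * (a x ⬝ᵥ a x) ∂μ = Pw)
    (E2 : ∫ x, b x ⬝ᵥ a x ∂μ = Pw)
    (E3 : ∫ x, (1 / Real.sqrt (1 + a x ⬝ᵥ a x)) * (a x ⬝ᵥ (a x - b x)) ∂μ = Pm)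
    (E4 : ∫ x, b x ⬝ᵥ (a x - b x) ∂μ = Pm)
    (E5 : ∫ x, (1 / Real.sqrt (1 + a x ⬝ᵥ a x)) * (a x ⬝ᵥ (a x + b x)) ∂μ = Pp)
    (E6 : ∫ x, b x ⬝ᵥ (a x + b x) ∂μ = Pp) :
    (∫ x, (a x - b x) ⬝ᵥ (a x - b x) ∂μ =
      ∫ x, (1 - 1 / Real.sqrt (1 + a x ⬝ᵥ a x)) * (a x ⬝ᵥ (a x - b x)) ∂μ) ∧
    Real.sqrt (∫ x, (a x - b x) ⬝ᵥ (a x - b x) ∂μ) ≤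
      ε ^ 3 / 2 * Real.sqrt (μ Set.univ).toReal := by
  have hsm : Measurable fun x => 1 / Real.sqrt (1 + a x ⬝ᵥ a x) :=
    measurable_const.div ((measurable_const.add (meas_dot ham ham)).sqrt)
  have haeb : ∀ᵐ x ∂μ, a x ⬝ᵥ a x ≤ ε ^ 2 := by
    filter_upwards [hbound] with x hx
    nlinarith [Real.sq_sqrt (dot_self_nonneg' (a x)), Real.sqrt_nonneg (a x ⬝ᵥ a x)]
  have haa : Integrable (fun x => a x ⬝ᵥ a x) μ := by
    refine Integrable.mono' (integrable_const (ε ^ 2)) (meas_dot ham ham).aestronglyMeasurable ?_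
    filter_upwards [haeb] with x hx
    rw [Real.norm_eq_abs, abs_of_nonneg (dot_self_nonneg' _)]; exact hx
  have hsaa : Integrable (fun x => (1 / Real.sqrt (1 + a x ⬝ᵥ a x)) * (a x ⬝ᵥ a x)) μ := by
    refine Integrable.mono' haa (hsm.mul (meas_dot ham ham)).aestronglyMeasurable
      (Filter.Eventually.of_forall fun x => ?_)
    have h0 := dot_self_nonneg' (a x)
    have hs1 := s_le_one h0
    have hs0 := (s_pos h0).le
    rw [Real.norm_eq_abs, abs_of_nonneg (by positivity)]
    nlinarith
  by_cases hInt : Integrable (fun x => (a x - b x) ⬝ᵥ (a x - b x)) μ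
  · -- Case A : the difference of gradients is square integrable
    have hcm : Measurable fun x => a x - b x := ham.sub hbm
    have hcc_m : Measurable fun x => (a x - b x) ⬝ᵥ (a x - b x) := meas_dot hcm hcm
    have hdom : Integrable (fun x => (((a x - b x) ⬝ᵥ (a x - b x)) + 1) / 2) μ :=
      (hInt.add (integrable_const 1)).div_const 2
    have hnormc : Integrable (fun x => Real.sqrt ((a x - b x) ⬝ᵥ (a x - b x))) μ := by
      refine Integrable.mono' hdom hcc_m.sqrt.aestronglyMeasurable
        (Filter.Eventually.of_forall fun x => ?_)
      have h0 := dot_self_nonneg' (a x - b x)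
      rw [Real.norm_eq_abs, abs_of_nonneg (Real.sqrt_nonneg _)]
      nlinarith [Real.sq_sqrt h0, Real.sqrt_nonneg ((a x - b x) ⬝ᵥ (a x - b x)),
        sq_nonneg (Real.sqrt ((a x - b x) ⬝ᵥ (a x - b x)) - 1)]
    have hac : Integrable (fun x => a x ⬝ᵥ (a x - b x)) μ := by
      refine Integrable.mono' (hnormc.const_mul ε)
        (meas_dot ham hcm).aestronglyMeasurable ?_
      filter_upwards [hbound] with x hx
      rw [Real.norm_eq_abs]
      calc |a x ⬝ᵥ (a x - b x)|
          ≤ Real.sqrt (a x ⬝ᵥ a x) * Real.sqrt ((a x - b x) ⬝ᵥ (a x - b x)) := dot_cs _ _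
        _ ≤ ε * Real.sqrt ((a x - b x) ⬝ᵥ (a x - b x)) :=
            mul_le_mul_of_nonneg_right hx (Real.sqrt_nonneg _)
    have hsac : Integrable
        (fun x => (1 / Real.sqrt (1 + a x ⬝ᵥ a x)) * (a x ⬝ᵥ (a x - b x))) μ := by
      refine Integrable.mono' hac.abs (hsm.mul (meas_dot ham hcm)).aestronglyMeasurable
        (Filter.Eventually.of_forall fun x => ?_)
      have h0 := dot_self_nonneg' (a x)
      rw [Real.norm_eq_abs, abs_mul, abs_of_nonneg (s_pos h0).le]
      exact mul_le_of_le_one_left (abs_nonneg _) (s_le_one h0)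
    have hbc : Integrable (fun x => b x ⬝ᵥ (a x - b x)) μ := by
      have e : (fun x => b x ⬝ᵥ (a x - b x)) =
          fun x => a x ⬝ᵥ (a x - b x) - (a x - b x) ⬝ᵥ (a x - b x) := by
        funext x; rw [sub_dotProduct]; ring
      rw [e]; exact hac.sub hInt
    have hE : ∫ x, (1 / Real.sqrt (1 + a x ⬝ᵥ a x)) * (a x ⬝ᵥ (a x - b x)) ∂μ
        = ∫ x, b x ⬝ᵥ (a x - b x) ∂μ := by rw [E3, E4]
    have claim1 : ∫ x, (a x - b x) ⬝ᵥ (a x - b x) ∂μ =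
        ∫ x, (1 - 1 / Real.sqrt (1 + a x ⬝ᵥ a x)) * (a x ⬝ᵥ (a x - b x)) ∂μ := by
      have e1 : (fun x => (a x - b x) ⬝ᵥ (a x - b x)) =
          fun x => a x ⬝ᵥ (a x - b x) - b x ⬝ᵥ (a x - b x) := by
        funext x; rw [sub_dotProduct]
      have e2 : (fun x => (1 - 1 / Real.sqrt (1 + a x ⬝ᵥ a x)) * (a x ⬝ᵥ (a x - b x))) =
          fun x => a x ⬝ᵥ (a x - b x) -
            (1 / Real.sqrt (1 + a x ⬝ᵥ a x)) * (a x ⬝ᵥ (a x - b x)) := by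
        funext x; ring
      rw [e1, e2, integral_sub hac hbc, integral_sub hac hsac, hE]
    refine ⟨claim1, ?_⟩
    have hInn : (0:ℝ) ≤ ∫ x, (a x - b x) ⬝ᵥ (a x - b x) ∂μ :=
      integral_nonneg fun x => dot_self_nonneg' _
    have hMnn : (0:ℝ) ≤ (μ Set.univ).toReal := ENNReal.toReal_nonneg
    have hJnn : (0:ℝ) ≤ ∫ x, Real.sqrt ((a x - b x) ⬝ᵥ (a x - b x)) ∂μ :=
      integral_nonneg fun x => Real.sqrt_nonneg _
    have hIM : (∫ x, (a x - b x) ⬝ᵥ (a x - b x) ∂μ) ≠ 0 → 0 < (μ Set.univ).toReal := by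
      intro hne
      rcases (eq_or_lt_of_le hMnn) with h0 | h
      · exfalso
        apply hne
        have hμ0 : μ = 0 := by
          rcases (ENNReal.toReal_eq_zero_iff _).mp h0.symm with h | h
          · exact Measure.measure_univ_eq_zero.mp h
          · exact absurd h (measure_ne_top μ _)
        rw [hμ0, integral_zero_measure]
      · exact h
    -- key 1 : I ≤ (ε³/2) ∫ |c|
    have hstep : ∫ x, (1 - 1 / Real.sqrt (1 + a x ⬝ᵥ a x)) * (a x ⬝ᵥ (a x - b x)) ∂μ ≤
        ε ^ 3 / 2 * ∫ x, Real.sqrt ((a x - b x) ⬝ᵥ (a x - b x)) ∂μ := by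
      rw [← integral_const_mul]
      have hint1 : Integrable
          (fun x => (1 - 1 / Real.sqrt (1 + a x ⬝ᵥ a x)) * (a x ⬝ᵥ (a x - b x))) μ := by
        have e2 : (fun x => (1 - 1 / Real.sqrt (1 + a x ⬝ᵥ a x)) * (a x ⬝ᵥ (a x - b x))) =
            fun x => a x ⬝ᵥ (a x - b x) -
              (1 / Real.sqrt (1 + a x ⬝ᵥ a x)) * (a x ⬝ᵥ (a x - b x)) := by
          funext x; ring
        rw [e2]; exact hac.sub hsac
      refine integral_mono_ae hint1 (hnormc.const_mul _) ?_
      filter_upwards [haeb] with x hx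
      have h0 := dot_self_nonneg' (a x)
      have h1 : 0 ≤ 1 - 1 / Real.sqrt (1 + a x ⬝ᵥ a x) := by linarith [s_le_one h0]
      have h2 := one_sub_s_le h0
      have hsle : 1 - 1 / Real.sqrt (1 + a x ⬝ᵥ a x) ≤ ε ^ 2 / 2 := by linarith
      have hcs := dot_cs (a x) (a x - b x)
      have hsqa : Real.sqrt (a x ⬝ᵥ a x) ≤ ε := by
        nlinarith [Real.sqrt_nonneg (a x ⬝ᵥ a x), Real.sq_sqrt h0]
      have hqa : |a x ⬝ᵥ (a x - b x)| ≤ ε * Real.sqrt ((a x - b x) ⬝ᵥ (a x - b x)) :=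
        hcs.trans (mul_le_mul_of_nonneg_right hsqa (Real.sqrt_nonneg _))
      have hq := le_abs_self (a x ⬝ᵥ (a x - b x))
      have t1 := mul_le_mul_of_nonneg_left hq h1
      have t2 := mul_le_mul_of_nonneg_right hsle (abs_nonneg (a x ⬝ᵥ (a x - b x)))
      have t3 := mul_le_mul_of_nonneg_left hqa
        (by positivity : (0:ℝ) ≤ ε ^ 2 / 2)
      nlinarith [Real.sqrt_nonneg ((a x - b x) ⬝ᵥ (a x - b x))]
    have key1 : ∫ x, (a x - b x) ⬝ᵥ (a x - b x) ∂μ ≤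
        ε ^ 3 / 2 * ∫ x, Real.sqrt ((a x - b x) ⬝ᵥ (a x - b x)) ∂μ :=
      claim1.le.trans hstep
    -- key 2 : the Cauchy–Schwarz type bound
    have pw : ∀ᵐ x ∂μ, (2 * (Real.sqrt (∫ y, (a y - b y) ⬝ᵥ (a y - b y) ∂μ) *
        Real.sqrt (μ Set.univ).toReal)) * Real.sqrt ((a x - b x) ⬝ᵥ (a x - b x)) ≤
        (μ Set.univ).toReal * ((a x - b x) ⬝ᵥ (a x - b x)) +
          ∫ y, (a y - b y) ⬝ᵥ (a y - b y) ∂μ := by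
      refine Filter.Eventually.of_forall fun x => ?_
      have h0 := dot_self_nonneg' (a x - b x)
      nlinarith [sq_nonneg (Real.sqrt (μ Set.univ).toReal *
          Real.sqrt ((a x - b x) ⬝ᵥ (a x - b x)) -
          Real.sqrt (∫ y, (a y - b y) ⬝ᵥ (a y - b y) ∂μ)),
        Real.sq_sqrt h0, Real.sq_sqrt hMnn, Real.sq_sqrt hInn,
        Real.sqrt_nonneg ((a x - b x) ⬝ᵥ (a x - b x))]
    have hmono := integral_mono_ae
      (hnormc.const_mul (2 * (Real.sqrt (∫ y, (a y - b y) ⬝ᵥ (a y - b y) ∂μ) *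
        Real.sqrt (μ Set.univ).toReal)))
      ((hInt.const_mul (μ Set.univ).toReal).add
        (integrable_const (∫ y, (a y - b y) ⬝ᵥ (a y - b y) ∂μ))) pw
    simp only [Pi.add_apply] at hmono
    rw [integral_const_mul, integral_add (hInt.const_mul (μ Set.univ).toReal)
      (integrable_const _), integral_const_mul, integral_const, smul_eq_mul] at hmono
    exact final_ineq hInn hMnn (by positivity) key1 hmono hIM
  · -- Case B : not square integrable; everything degenerates
    have hccz : ∫ x, (a x - b x) ⬝ᵥ (a x - b x) ∂μ = 0 := integral_undef hInt
    have hz : ∫ x, (1 / Real.sqrt (1 + a x ⬝ᵥ a x)) * (a x ⬝ᵥ a x) ∂μ = 0 := by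
      by_cases hab : Integrable (fun x => a x ⬝ᵥ b x) μ
      · have hba : Integrable (fun x => b x ⬝ᵥ a x) μ := by
          have e : (fun x => b x ⬝ᵥ a x) = fun x => a x ⬝ᵥ b x :=
            funext fun x => dotProduct_comm _ _
          rw [e]; exact hab
        have hbb : ¬ Integrable (fun x => b x ⬝ᵥ b x) μ := by
          intro h
          apply hInt
          have e : (fun x => (a x - b x) ⬝ᵥ (a x - b x)) =
              fun x => (a x ⬝ᵥ a x - 2 * (a x ⬝ᵥ b x)) + b x ⬝ᵥ b x := by
            funext x
            simp only [dotProduct, Fin.sum_univ_two, Pi.sub_apply]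
            ring
          rw [e]
          exact (haa.sub (hab.const_mul 2)).add h
        have hsab : Integrable
            (fun x => (1 / Real.sqrt (1 + a x ⬝ᵥ a x)) * (a x ⬝ᵥ b x)) μ := by
          refine Integrable.mono' hab.abs (hsm.mul (meas_dot ham hbm)).aestronglyMeasurable
            (Filter.Eventually.of_forall fun x => ?_)
          have h0 := dot_self_nonneg' (a x)
          rw [Real.norm_eq_abs, abs_mul, abs_of_nonneg (s_pos h0).le]
          exact mul_le_of_le_one_left (abs_nonneg _) (s_le_one h0)
        have hPm : Pm = 0 := by
          have hn : ¬ Integrable (fun x => b x ⬝ᵥ (a x - b x)) μ := by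
            intro h
            apply hbb
            have e : (fun x => b x ⬝ᵥ b x) =
                fun x => b x ⬝ᵥ a x - b x ⬝ᵥ (a x - b x) := by
              funext x; rw [dotProduct_sub]; ring
            rw [e]; exact hba.sub h
          rw [← E4]; exact integral_undef hn
        have hPp : Pp = 0 := by
          have hn : ¬ Integrable (fun x => b x ⬝ᵥ (a x + b x)) μ := by
            intro h
            apply hbb
            have e : (fun x => b x ⬝ᵥ b x) =
                fun x => b x ⬝ᵥ (a x + b x) - b x ⬝ᵥ a x := by
              funext x; rw [dotProduct_add]; ring
            rw [e]; exact h.sub hba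
          rw [← E6]; exact integral_undef hn
        have h3 : (∫ x, (1 / Real.sqrt (1 + a x ⬝ᵥ a x)) * (a x ⬝ᵥ a x) ∂μ) -
            (∫ x, (1 / Real.sqrt (1 + a x ⬝ᵥ a x)) * (a x ⬝ᵥ b x) ∂μ) = 0 := by
          have e : (fun x => (1 / Real.sqrt (1 + a x ⬝ᵥ a x)) * (a x ⬝ᵥ (a x - b x))) =
              fun x => (1 / Real.sqrt (1 + a x ⬝ᵥ a x)) * (a x ⬝ᵥ a x) -
                (1 / Real.sqrt (1 + a x ⬝ᵥ a x)) * (a x ⬝ᵥ b x) := by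
            funext x; rw [dotProduct_sub]; ring
          rw [e, integral_sub hsaa hsab] at E3
          rw [E3, hPm]
        have h5 : (∫ x, (1 / Real.sqrt (1 + a x ⬝ᵥ a x)) * (a x ⬝ᵥ a x) ∂μ) +
            (∫ x, (1 / Real.sqrt (1 + a x ⬝ᵥ a x)) * (a x ⬝ᵥ b x) ∂μ) = 0 := by
          have e : (fun x => (1 / Real.sqrt (1 + a x ⬝ᵥ a x)) * (a x ⬝ᵥ (a x + b x))) =
              fun x => (1 / Real.sqrt (1 + a x ⬝ᵥ a x)) * (a x ⬝ᵥ a x) +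
                (1 / Real.sqrt (1 + a x ⬝ᵥ a x)) * (a x ⬝ᵥ b x) := by
            funext x; rw [dotProduct_add]; ring
          rw [e, integral_add hsaa hsab] at E5
          rw [E5, hPp]
        linarith
      · have hba : ¬ Integrable (fun x => b x ⬝ᵥ a x) μ := by
          intro h; apply hab
          have e : (fun x => a x ⬝ᵥ b x) = fun x => b x ⬝ᵥ a x :=
            funext fun x => dotProduct_comm _ _
          rw [e]; exact h
        have hPw : Pw = 0 := by rw [← E2]; exact integral_undef hba
        rw [E1, hPw]
    have haez : ∀ᵐ x ∂μ, a x ⬝ᵥ a x = 0 := by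
      have h0 : 0 ≤ᶠ[ae μ] fun x => (1 / Real.sqrt (1 + a x ⬝ᵥ a x)) * (a x ⬝ᵥ a x) :=
        Filter.Eventually.of_forall fun x => by
          have h0 := dot_self_nonneg' (a x)
          exact mul_nonneg (s_pos h0).le h0
      have hae := (integral_eq_zero_iff_of_nonneg_ae h0 hsaa).mp hz
      filter_upwards [hae] with x hx
      simp only [Pi.zero_apply] at hx
      rcases mul_eq_zero.mp hx with h | h
      · exact absurd h (ne_of_gt (s_pos (dot_self_nonneg' (a x))))
      · exact h
    have hRHS : ∫ x, (1 - 1 / Real.sqrt (1 + a x ⬝ᵥ a x)) * (a x ⬝ᵥ (a x - b x)) ∂μ = 0 := by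
      refine integral_eq_zero_of_ae ?_
      filter_upwards [haez] with x hx
      simp only [Pi.zero_apply, hx]
      norm_num
    exact ⟨hccz.trans hRHS.symm, by rw [hccz, Real.sqrt_zero]; positivity⟩

/-- The gradient of a scalar function on `ℝ²`, as a vector of partial derivatives. -/
noncomputable def grad (u : (Fin 2 → ℝ) → ℝ) (x : Fin 2 → ℝ) : Fin 2 → ℝ :=
  fun i => fderiv ℝ u x (Pi.single i 1)

/-- Comparison of the prescribed mean curvature solution `w` with the Poisson solution `v`:
the energy identity `∫ |∇(w−v)|² = ∫ (1 − 1/√(1+|∇w|²)) ∇w·∇(w−v)` holds, and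
`‖∇(w−v)‖_{L²} ≤ (ε³/2)|Ω|^{1/2}`. -/
theorem poisson_approximation (Ω : Set (Fin 2 → ℝ)) (hΩ : IsOpen Ω)
    (hb : Bornology.IsBounded Ω) (ε : ℝ) (hε : 0 ≤ ε)
    (w v : (Fin 2 → ℝ) → ℝ) (p : (Fin 2 → ℝ) → ℝ)
    (hw : ContDiff ℝ 1 w) (hv : Differentiable ℝ v)
    (hw0 : ∀ x ∉ Ω, w x = 0) (hv0 : ∀ x ∉ Ω, v x = 0)
    (hgw : ∀ x ∈ Ω, Real.sqrt (grad w x ⬝ᵥ grad w x) ≤ ε)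
    (hweakw : ∀ φ : (Fin 2 → ℝ) → ℝ, Differentiable ℝ φ → (∀ x ∉ Ω, φ x = 0) →
      ∫ x in Ω, ((1 / Real.sqrt (1 + grad w x ⬝ᵥ grad w x)) • grad w x) ⬝ᵥ grad φ x =
        -∫ x in Ω, p x * φ x)
    (hweakv : ∀ φ : (Fin 2 → ℝ) → ℝ, Differentiable ℝ φ → (∀ x ∉ Ω, φ x = 0) →
      ∫ x in Ω, grad v x ⬝ᵥ grad φ x = -∫ x in Ω, p x * φ x) :
    (∫ x in Ω, (grad w x - grad v x) ⬝ᵥ (grad w x - grad v x) =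
      ∫ x in Ω, (1 - 1 / Real.sqrt (1 + grad w x ⬝ᵥ grad w x)) *
        (grad w x ⬝ᵥ (grad w x - grad v x))) ∧
    Real.sqrt (∫ x in Ω, (grad w x - grad v x) ⬝ᵥ (grad w x - grad v x)) ≤
      (ε ^ 3 / 2) * Real.sqrt (volume Ω).toReal := by

  haveI : IsFiniteMeasure (volume.restrict Ω) :=
    ⟨by rw [Measure.restrict_apply_univ]; exact hb.measure_lt_top⟩
  have hwd : Differentiable ℝ w := hw.differentiable one_ne_zero
  have haC : Continuous (grad w) := by
    refine continuous_pi fun i => ?_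
    exact (ContinuousLinearMap.apply ℝ ℝ (Pi.single i 1)).continuous.comp
      (hw.continuous_fderiv one_ne_zero)
  have ham : Measurable (grad w) := haC.measurable
  have hbm : Measurable (grad v) := by
    refine measurable_pi_lambda _ fun i => ?_
    exact ((ContinuousLinearMap.apply ℝ ℝ (Pi.single i 1)).continuous.measurable).comp
      (measurable_fderiv ℝ v)
  have hbound : ∀ᵐ x ∂(volume.restrict Ω), Real.sqrt (grad w x ⬝ᵥ grad w x) ≤ ε := by
    filter_upwards [ae_restrict_mem hΩ.measurableSet] with x hx using hgw x hx
  have hgsub : ∀ x, grad (fun y => w y - v y) x = grad w x - grad v x := by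
    intro x; funext i
    simp only [grad, Pi.sub_apply]
    rw [fderiv_fun_sub (hwd x) (hv x), ContinuousLinearMap.sub_apply]
  have hgadd : ∀ x, grad (fun y => w y + v y) x = grad w x + grad v x := by
    intro x; funext i
    simp only [grad, Pi.add_apply]
    rw [fderiv_fun_add (hwd x) (hv x), ContinuousLinearMap.add_apply]
  have e1 := hweakw w hwd hw0
  have e2 := hweakv w hwd hw0
  have e3 := hweakw (fun y => w y - v y) (hwd.sub hv)
    (fun x hx => by simp [hw0 x hx, hv0 x hx])
  have e4 := hweakv (fun y => w y - v y) (hwd.sub hv)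
    (fun x hx => by simp [hw0 x hx, hv0 x hx])
  have e5 := hweakw (fun y => w y + v y) (hwd.add hv)
    (fun x hx => by simp [hw0 x hx, hv0 x hx])
  have e6 := hweakv (fun y => w y + v y) (hwd.add hv)
    (fun x hx => by simp [hw0 x hx, hv0 x hx])
  simp only [smul_dotProduct, smul_eq_mul] at e1 e3 e5
  simp only [hgsub] at e3 e4
  simp only [hgadd] at e5 e6
  have H := main_aux (volume.restrict Ω) ε hε (grad w) (grad v) ham hbm hbound
    _ _ _ e1 e2 e3 e4 e5 e6
  rw [Measure.restrict_apply_univ] at H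
  exact H
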